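/- Let v₁,…,vₙ ∈ ℝ^d, let t be an integer with 0 ≤ 2t < n, let D ≥ 0, and let A, B ⊆ {1,…,n} with |A| = |B| = n−t such that diam({v_i : i ∈ A}) ≤ D and diam({v_i : i ∈ B}) ≤ D. Then the centroids c_A = (1/(n−t))·∑_{i∈A} v_i and c_B = (1/(n−t))·∑_{i∈B} v_i satisfy dist(c_A, c_B) ≤ (2t/(n−t)) · D. -/
import Mathlib


/-- If `A` and `B` are two `(n-t)`-element subsets of the `n` input vectors, each of diameter
at most `D`, then their centroids are at distance at most `(2t/(n-t)) · D`. -/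
theorem dist_centroids_le (n d t : ℕ) (ht : 2 * t < n) (D : ℝ) (hD : 0 ≤ D)
    (v : Fin n → EuclideanSpace ℝ (Fin d))
    (A B : Finset (Fin n)) (hA : A.card = n - t) (hB : B.card = n - t)
    (hdA : Metric.diam (v '' ↑A) ≤ D) (hdB : Metric.diam (v '' ↑B) ≤ D) :
    dist ((1 / ((n - t : ℕ) : ℝ)) • ∑ i ∈ A, v i)
        ((1 / ((n - t : ℕ) : ℝ)) • ∑ i ∈ B, v i)
      ≤ (2 * (t : ℝ) / ((n - t : ℕ) : ℝ)) * D := by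
  have hmpos : 0 < n - t := by omega
  have hm0 : (0:ℝ) < ((n - t : ℕ) : ℝ) := by exact_mod_cast hmpos
  -- cardinality of the intersection
  have hU : (A ∪ B).card ≤ n := by
    simpa using Finset.card_le_univ (A ∪ B)
  have hunion := Finset.card_union_add_card_inter A B
  have hIcard : n - 2 * t ≤ (A ∩ B).card := by omega
  have hAsd := Finset.card_sdiff_add_card_inter A B
  have hBsd := Finset.card_sdiff_add_card_inter B A
  rw [Finset.inter_comm B A] at hBsd
  have hkA : (A \ B).card ≤ t := by omega
  have hkk : (A \ B).card = (B \ A).card := by omega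
  obtain ⟨x, hx⟩ : (A ∩ B).Nonempty := Finset.card_pos.mp (by omega)
  have hxA : x ∈ A := (Finset.mem_inter.mp hx).1
  have hxB : x ∈ B := (Finset.mem_inter.mp hx).2
  have hbA : Bornology.IsBounded (v '' ↑A) := (A.finite_toSet.image v).isBounded
  have hbB : Bornology.IsBounded (v '' ↑B) := (B.finite_toSet.image v).isBounded
  -- main sum identity
  have key : (∑ i ∈ A, v i) - (∑ i ∈ B, v i)
      = (∑ i ∈ A \ B, (v i - v x)) - (∑ i ∈ B \ A, (v i - v x)) := by
    rw [Finset.sum_sub_distrib, Finset.sum_sub_distrib, Finset.sum_const, Finset.sum_const,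
      hkk, sub_sub_sub_cancel_right, Finset.sum_sdiff_sub_sum_sdiff]
  have hnorm : ‖(∑ i ∈ A, v i) - (∑ i ∈ B, v i)‖ ≤ 2 * (t:ℝ) * D := by
    rw [key]
    calc ‖(∑ i ∈ A \ B, (v i - v x)) - (∑ i ∈ B \ A, (v i - v x))‖
        ≤ ‖∑ i ∈ A \ B, (v i - v x)‖ + ‖∑ i ∈ B \ A, (v i - v x)‖ := norm_sub_le _ _
      _ ≤ (∑ i ∈ A \ B, ‖v i - v x‖) + ∑ i ∈ B \ A, ‖v i - v x‖ := by
          gcongr <;> exact norm_sum_le _ _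
      _ ≤ (∑ _i ∈ A \ B, D) + ∑ _i ∈ B \ A, D := by
          gcongr with i hi i hi
          · rw [← dist_eq_norm]
            exact le_trans (Metric.dist_le_diam_of_mem hbA
              (Set.mem_image_of_mem v (Finset.mem_sdiff.mp hi).1)
              (Set.mem_image_of_mem v hxA)) hdA
          · rw [← dist_eq_norm]
            exact le_trans (Metric.dist_le_diam_of_mem hbB
              (Set.mem_image_of_mem v (Finset.mem_sdiff.mp hi).1)
              (Set.mem_image_of_mem v hxB)) hdB
      _ = ((A \ B).card : ℝ) * D + ((B \ A).card : ℝ) * D := by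
          rw [Finset.sum_const, Finset.sum_const]; push_cast; ring
      _ ≤ (t:ℝ) * D + (t:ℝ) * D := by
          have h1 : ((A \ B).card : ℝ) ≤ (t:ℝ) := by exact_mod_cast hkA
          have h2 : ((B \ A).card : ℝ) ≤ (t:ℝ) := by exact_mod_cast (hkk ▸ hkA)
          exact add_le_add (mul_le_mul_of_nonneg_right h1 hD) (mul_le_mul_of_nonneg_right h2 hD)
      _ = 2 * (t:ℝ) * D := by ring
  rw [dist_eq_norm, ← smul_sub, norm_smul]
  rw [Real.norm_eq_abs, abs_of_pos (by positivity : (0:ℝ) < 1 / ((n - t : ℕ) : ℝ))]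
  rw [div_mul_eq_mul_div, div_mul_eq_mul_div, one_mul]
  gcongr
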